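/- (Empirical pre-sparsity for Lasso, deterministic.) In the Lasso setup with d_i = f_i'β₀ + a_i + v_i, ‖β₀‖₀ ≤ s with support T, ((1/n)∑a_i²)^{1/2} ≤ c_s, penalty λ/n ≥ c‖S‖_∞ with c > 1, loadings ℓΥ⁰ ≤ Υ ≤ uΥ⁰ with u ≥ 1 ≥ ℓ > 1/c, let T̂ be the support of the Lasso solution β̂ and m̂ = |T̂ ∖ T|. Then √m̂ ≤ √(φ_max(m̂)) · ‖(Υ⁰)^{−1}‖_∞ · c₀ · ( 2√s/κ_{c₀} + 6n c_s/λ ), where c₀ = (uc+1)/(ℓc−1), φ_max(m) is the maximal m-sparse eigenvalue of (1/n)F'F, and κ_{c₀} is the weighted restricted eigenvalue (assumed positive). -/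

import Mathlib

lemma aux_eps_le {A B C ε₀ : ℝ} (hε₀ : 0 < ε₀) (hC : 0 ≤ C)
    (h : ∀ ε : ℝ, 0 < ε → ε ≤ ε₀ → A ≤ B + ε * C) : A ≤ B := by
  by_contra hAB
  push_neg at hAB
  set q : ℝ := (A - B) / (2 * C + 2) with hq
  have hq0 : 0 < q := by
    apply div_pos (by linarith) (by linarith)
  have hqe : q * (2 * C + 2) = A - B := div_mul_cancel₀ _ (by linarith)
  have hε : 0 < min ε₀ q := lt_min hε₀ hq0
  have h1 := h (min ε₀ q) hε (min_le_left _ _)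
  have h2 : min ε₀ q ≤ q := min_le_right _ _
  have h3 : min ε₀ q * C ≤ q * C := mul_le_mul_of_nonneg_right h2 hC
  nlinarith [mul_nonneg hq0.le hC]

lemma aux_cs {ι : Type*} (s : Finset ι) (x y : ι → ℝ) :
    ∑ i ∈ s, x i * y i ≤ Real.sqrt (∑ i ∈ s, x i ^ 2) * Real.sqrt (∑ i ∈ s, y i ^ 2) := by
  have h := Finset.sum_mul_sq_le_sq_mul_sq s x y
  calc ∑ i ∈ s, x i * y i ≤ |∑ i ∈ s, x i * y i| := le_abs_self _
    _ = Real.sqrt ((∑ i ∈ s, x i * y i) ^ 2) := (Real.sqrt_sq_eq_abs _).symm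
    _ ≤ Real.sqrt ((∑ i ∈ s, x i ^ 2) * ∑ i ∈ s, y i ^ 2) := Real.sqrt_le_sqrt h
    _ = _ := Real.sqrt_mul (by positivity) _

lemma aux_tri {ι : Type*} (s : Finset ι) (x y : ι → ℝ) :
    Real.sqrt (∑ i ∈ s, (x i + y i) ^ 2)
      ≤ Real.sqrt (∑ i ∈ s, x i ^ 2) + Real.sqrt (∑ i ∈ s, y i ^ 2) := by
  have hx : (0:ℝ) ≤ ∑ i ∈ s, x i ^ 2 := by positivity
  have hy : (0:ℝ) ≤ ∑ i ∈ s, y i ^ 2 := by positivity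
  have hcs := aux_cs s x y
  have key : ∑ i ∈ s, (x i + y i) ^ 2
      ≤ (Real.sqrt (∑ i ∈ s, x i ^ 2) + Real.sqrt (∑ i ∈ s, y i ^ 2)) ^ 2 := by
    have hexp : ∑ i ∈ s, (x i + y i) ^ 2
        = ∑ i ∈ s, x i ^ 2 + 2 * ∑ i ∈ s, x i * y i + ∑ i ∈ s, y i ^ 2 := by
      rw [Finset.mul_sum, ← Finset.sum_add_distrib, ← Finset.sum_add_distrib]
      exact Finset.sum_congr rfl fun i _ => by ring
    have h1 : Real.sqrt (∑ i ∈ s, x i ^ 2) ^ 2 = ∑ i ∈ s, x i ^ 2 := Real.sq_sqrt hx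
    have h2 : Real.sqrt (∑ i ∈ s, y i ^ 2) ^ 2 = ∑ i ∈ s, y i ^ 2 := Real.sq_sqrt hy
    nlinarith
  calc Real.sqrt (∑ i ∈ s, (x i + y i) ^ 2)
      ≤ Real.sqrt ((Real.sqrt (∑ i ∈ s, x i ^ 2) + Real.sqrt (∑ i ∈ s, y i ^ 2)) ^ 2) :=
        Real.sqrt_le_sqrt key
    _ = _ := Real.sqrt_sq (by positivity)

/-- Swap of double sums used twice. -/
lemma aux_swap (n p : ℕ) (M : Matrix (Fin n) (Fin p) ℝ) (x : Fin p → ℝ) (y : Fin n → ℝ) :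
    ∑ j, x j * (2 * ((1/(n:ℝ)) * ∑ i, M i j * y i))
      = 2 * ((1/(n:ℝ)) * ∑ i, (∑ j, M i j * x j) * y i) := by
  have hL : ∀ j, x j * (2 * ((1/(n:ℝ)) * ∑ i, M i j * y i))
      = ∑ i, 2 * (1/(n:ℝ)) * (M i j * x j * y i) := by
    intro j
    calc x j * (2 * ((1/(n:ℝ)) * ∑ i, M i j * y i))
        = (2 * (1/(n:ℝ)) * x j) * ∑ i, M i j * y i := by ring
      _ = ∑ i, (2 * (1/(n:ℝ)) * x j) * (M i j * y i) := Finset.mul_sum _ _ _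
      _ = ∑ i, 2 * (1/(n:ℝ)) * (M i j * x j * y i) :=
          Finset.sum_congr rfl fun i _ => by ring
  have hR : ∀ i, 2 * (1/(n:ℝ)) * ((∑ j, M i j * x j) * y i)
      = ∑ j, 2 * (1/(n:ℝ)) * (M i j * x j * y i) := by
    intro i
    calc 2 * (1/(n:ℝ)) * ((∑ j, M i j * x j) * y i)
        = (2 * (1/(n:ℝ)) * y i) * ∑ j, M i j * x j := by ring
      _ = ∑ j, (2 * (1/(n:ℝ)) * y i) * (M i j * x j) := Finset.mul_sum _ _ _
      _ = ∑ j, 2 * (1/(n:ℝ)) * (M i j * x j * y i) :=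
          Finset.sum_congr rfl fun j _ => by ring
  calc ∑ j, x j * (2 * ((1/(n:ℝ)) * ∑ i, M i j * y i))
      = ∑ j, ∑ i, 2 * (1/(n:ℝ)) * (M i j * x j * y i) :=
        Finset.sum_congr rfl fun j _ => hL j
    _ = ∑ i, ∑ j, 2 * (1/(n:ℝ)) * (M i j * x j * y i) := Finset.sum_comm
    _ = ∑ i, 2 * (1/(n:ℝ)) * ((∑ j, M i j * x j) * y i) :=
        Finset.sum_congr rfl fun i _ => (hR i).symm
    _ = 2 * ((1/(n:ℝ)) * ∑ i, (∑ j, M i j * x j) * y i) := by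
        rw [show (2:ℝ) * ((1/(n:ℝ)) * ∑ i, (∑ j, M i j * x j) * y i)
            = (2 * (1/(n:ℝ))) * ∑ i, (∑ j, M i j * x j) * y i from by ring,
          Finset.mul_sum]

/-- `(1/n)·(√X·√Y) → √((1/n)X)·√((1/n)Y)` -/
lemma aux_sqrt_split (N X Y : ℝ) (hN : 0 ≤ N) (hX : 0 ≤ X) (hY : 0 ≤ Y) :
    Real.sqrt ((1/N) * X) * Real.sqrt ((1/N) * Y) = (1/N) * (Real.sqrt X * Real.sqrt Y) := by
  have h1N : (0:ℝ) ≤ 1/N := by positivity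
  rw [Real.sqrt_mul h1N X, Real.sqrt_mul h1N Y]
  have h := Real.mul_self_sqrt h1N
  linear_combination (Real.sqrt X * Real.sqrt Y) * h

lemma aux_kkt (n p : ℕ) (hn : 0 < n)
    (f : Matrix (Fin n) (Fin p) ℝ) (d : Fin n → ℝ) (lam : ℝ)
    (Υ : Fin p → ℝ) (βhat : Fin p → ℝ)
    (hopt : ∀ β : Fin p → ℝ,
      (1 / (n : ℝ)) * (∑ i, (d i - ∑ j, f i j * βhat j) ^ 2)
          + (lam / n) * ∑ j, Υ j * |βhat j|
        ≤ (1 / (n : ℝ)) * (∑ i, (d i - ∑ j, f i j * β j) ^ 2)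
          + (lam / n) * ∑ j, Υ j * |β j|)
    (j : Fin p) (hj : βhat j ≠ 0) :
    lam / n * Υ j ≤ |2 * ((1 / (n : ℝ)) * ∑ i, f i j * (d i - ∑ k, f i k * βhat k))| := by
  have hN : (0:ℝ) < (n:ℝ) := by exact_mod_cast hn
  set r : Fin n → ℝ := fun i => d i - ∑ k, f i k * βhat k with hr
  set G : ℝ := 2 * ((1 / (n : ℝ)) * ∑ i, f i j * r i) with hG
  obtain ⟨σ, hσ1, hσ2⟩ : ∃ σ : ℝ, (σ = 1 ∨ σ = -1) ∧ |βhat j| = σ * βhat j := by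
    rcases le_or_gt 0 (βhat j) with h | h
    · exact ⟨1, Or.inl rfl, by rw [abs_of_nonneg h, one_mul]⟩
    · exact ⟨-1, Or.inr rfl, by rw [abs_of_neg h]; ring⟩
  have hσsq : σ ^ 2 = 1 := by rcases hσ1 with h | h <;> subst h <;> norm_num
  have hσabs : |σ| = 1 := by rcases hσ1 with h | h <;> subst h <;> norm_num
  suffices hs : lam / n * Υ j ≤ σ * G by
    calc lam / n * Υ j ≤ σ * G := hs
      _ ≤ |σ * G| := le_abs_self _
      _ = |G| := by rw [abs_mul, hσabs, one_mul]
  set C : ℝ := (1 / (n : ℝ)) * ∑ i, (f i j) ^ 2 with hCdef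
  have hC : 0 ≤ C := by positivity
  apply aux_eps_le (abs_pos.2 hj) hC
  intro ε hε hεle
  set β : Fin p → ℝ := fun k => βhat k - (if k = j then ε * σ else 0) with hβ
  have hsum : ∀ i, ∑ k, f i k * β k = (∑ k, f i k * βhat k) - ε * σ * f i j := by
    intro i
    have h1 : ∀ k, f i k * β k
        = f i k * βhat k - (if k = j then ε * σ * f i j else 0) := by
      intro k
      simp only [hβ]
      split_ifs with h
      · subst h; ring
      · ring
    rw [Finset.sum_congr rfl fun k _ => h1 k, Finset.sum_sub_distrib,
      Finset.sum_ite_eq' Finset.univ j (fun _ => ε * σ * f i j)]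
    simp
  have habsj : |βhat j - ε * σ| = |βhat j| - ε := by
    have : |βhat j - ε * σ| = |σ * (βhat j - ε * σ)| := by
      rw [abs_mul, hσabs, one_mul]
    rw [this]
    have h2 : σ * (βhat j - ε * σ) = |βhat j| - ε := by
      rw [mul_sub, ← hσ2]; nlinarith
    rw [h2, abs_of_nonneg (by linarith)]
  have hpen : ∑ k, Υ k * |β k| = (∑ k, Υ k * |βhat k|) - ε * Υ j := by
    have h1 : ∀ k, Υ k * |β k|
        = Υ k * |βhat k| - (if k = j then ε * Υ j else 0) := by
      intro k
      simp only [hβ]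
      split_ifs with h
      · subst h; rw [habsj]; ring
      · simp
    rw [Finset.sum_congr rfl fun k _ => h1 k, Finset.sum_sub_distrib,
      Finset.sum_ite_eq' Finset.univ j (fun _ => ε * Υ j)]
    simp
  have hres : ∑ i, (d i - ∑ k, f i k * β k) ^ 2
      = ∑ i, (r i) ^ 2 + ε * σ * (2 * ∑ i, f i j * r i) + ε ^ 2 * ∑ i, (f i j) ^ 2 := by
    have h1 : ∀ i, (d i - ∑ k, f i k * β k) ^ 2
        = (r i) ^ 2 + ε * σ * (2 * (f i j * r i)) + ε ^ 2 * (f i j) ^ 2 := by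
      intro i
      rw [hsum i]
      have : d i - ((∑ k, f i k * βhat k) - ε * σ * f i j) = r i + ε * σ * f i j := by
        rw [hr]; ring
      rw [this]
      rcases hσ1 with h | h <;> subst h <;> ring
    rw [Finset.sum_congr rfl fun i _ => h1 i, Finset.sum_add_distrib,
      Finset.sum_add_distrib, ← Finset.mul_sum, ← Finset.mul_sum, ← Finset.mul_sum]
  have hq := hopt β
  rw [hres, hpen] at hq
  have hrs : ∑ i, (d i - ∑ j, f i j * βhat j) ^ 2 = ∑ i, r i ^ 2 := rfl
  rw [hrs] at hq
  clear_value r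
  have key : ε * (lam / n * Υ j) ≤ ε * (σ * G + ε * C) := by
    rw [hG, hCdef]
    ring_nf at hq ⊢
    linarith
  exact le_of_mul_le_mul_left (by linarith [key]) hε

/-- Empirical prediction norm `‖Fδ‖_{2,n} = ((1/n)∑ᵢ (fᵢ'δ)²)^{1/2}`. -/
noncomputable def predNorm (n p : ℕ) (F : Matrix (Fin n) (Fin p) ℝ)
    (δ : Fin p → ℝ) : ℝ :=
  Real.sqrt ((1 / (n : ℝ)) * ∑ i, (∑ j, F i j * δ j) ^ 2)

set_option maxHeartbeats 2000000 in
/-- Empirical pre-sparsity for Lasso (deterministic form of Lemma 8): with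
`m̂ = |T̂ ∖ T|` the number of wrong regressors selected by Lasso,
`√m̂ ≤ √(φ_max(m̂)) ‖(Υ⁰)⁻¹‖_∞ c₀ (2√s/κ_{c₀} + 6n c_s/λ)`. -/
theorem lasso_empirical_pre_sparsity
    (n p s : ℕ) (hn : 0 < n) (hp : 0 < p)
    (f : Matrix (Fin n) (Fin p) ℝ)
    (β₀ : Fin p → ℝ) (T : Finset (Fin p))
    (hT : T = Finset.univ.filter (fun j => β₀ j ≠ 0)) (hTs : T.card ≤ s)
    (d a v : Fin n → ℝ)
    (hmodel : ∀ i, d i = (∑ j, f i j * β₀ j) + a i + v i)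
    (cs : ℝ) (hcs0 : 0 ≤ cs)
    (hcs : Real.sqrt ((1 / (n : ℝ)) * ∑ i, (a i) ^ 2) ≤ cs)
    (Υ0 Υ : Fin p → ℝ) (hΥ0 : ∀ j, 0 < Υ0 j)
    (c ℓ u lam : ℝ) (hc : 1 < c) (hu : 1 ≤ u) (hℓ1 : ℓ ≤ 1) (hℓc : 1 / c < ℓ)
    (hlampos : 0 < lam)
    (hload : ∀ j, ℓ * Υ0 j ≤ Υ j ∧ Υ j ≤ u * Υ0 j)
    (S : Fin p → ℝ)
    (hS : ∀ j, S j = 2 * ((1 / (n : ℝ)) * ∑ i, f i j * v i) / Υ0 j)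
    (hlam : ∀ j, c * |S j| ≤ lam / n)
    (βhat : Fin p → ℝ)
    (hopt : ∀ β : Fin p → ℝ,
      (1 / (n : ℝ)) * (∑ i, (d i - ∑ j, f i j * βhat j) ^ 2)
          + (lam / n) * ∑ j, Υ j * |βhat j|
        ≤ (1 / (n : ℝ)) * (∑ i, (d i - ∑ j, f i j * β j) ^ 2)
          + (lam / n) * ∑ j, Υ j * |β j|)
    (c0 κ : ℝ) (hc0 : c0 = (u * c + 1) / (ℓ * c - 1))
    (hκ : κ = sInf {r : ℝ | ∃ δ : Fin p → ℝ, δ ≠ 0 ∧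
      (∑ j ∈ Tᶜ, |Υ0 j * δ j|) ≤ c0 * ∑ j ∈ T, |Υ0 j * δ j| ∧
      r = Real.sqrt s * predNorm n p f δ / ∑ j ∈ T, |Υ0 j * δ j|})
    (hκpos : 0 < κ)
    (That : Finset (Fin p)) (hThat : That = Finset.univ.filter (fun j => βhat j ≠ 0))
    (mhat : ℕ) (hmhat : mhat = (That \ T).card)
    (φmax : ℕ → ℝ)
    (hφmax : ∀ k : ℕ, φmax k = sSup {x : ℝ | ∃ α : Fin p → ℝ,
      (Finset.univ.filter (fun j => α j ≠ 0)).card ≤ k ∧ (∑ j, (α j) ^ 2) = 1 ∧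
      x = (1 / (n : ℝ)) * ∑ i, (∑ j, f i j * α j) ^ 2}) :
    Real.sqrt mhat
      ≤ Real.sqrt (φmax mhat) * (⨆ j, (Υ0 j)⁻¹) * c0
          * (2 * Real.sqrt s / κ + 6 * n * cs / lam) := by
  have hN : (0:ℝ) < (n:ℝ) := by exact_mod_cast hn
  have hNne : ((n:ℝ)) ≠ 0 := hN.ne'
  have hcpos : (0:ℝ) < c := by linarith
  have hinvc : 0 < 1/c := by positivity
  have hℓpos : 0 < ℓ := lt_trans hinvc hℓc
  have hℓ1c : 0 < ℓ - 1/c := by linarith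
  have huc : 1 ≤ u + 1/c := by linarith
  have hℓc1 : 0 < ℓ * c - 1 := by
    have := (div_lt_iff₀ hcpos).mp hℓc
    linarith
  have hc0eq : (ℓ - 1/c) * c0 = u + 1/c := by
    rw [hc0]; field_simp
  have hc0pos : 0 < c0 := by
    rw [hc0]; positivity
  -- sup of reciprocals
  set Sup : ℝ := ⨆ j, (Υ0 j)⁻¹ with hSupdef
  have hSup_ge : ∀ j, (Υ0 j)⁻¹ ≤ Sup := fun j =>
    le_ciSup (f := fun j => (Υ0 j)⁻¹) (Set.Finite.bddAbove (Set.finite_range _)) j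
  have hj0 : Fin p := ⟨0, hp⟩
  have hSuppos : 0 < Sup := lt_of_lt_of_le (inv_pos.mpr (hΥ0 hj0)) (hSup_ge hj0)
  set B : ℝ := Sup⁻¹ with hBdef
  have hBpos : 0 < B := inv_pos.mpr hSuppos
  have hB_le : ∀ j, B ≤ Υ0 j := by
    intro j
    rw [hBdef, show Υ0 j = ((Υ0 j)⁻¹)⁻¹ from (inv_inv _).symm]
    exact inv_anti₀ (inv_pos.mpr (hΥ0 j)) (hSup_ge j)
  -- basic objects
  set δhat : Fin p → ℝ := fun j => βhat j - β₀ j with hδhat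
  set uu : Fin n → ℝ := fun i => (∑ k, f i k * (β₀ k - βhat k)) + a i with huu
  set W : Finset (Fin p) := That \ T with hW
  set g : Fin p → ℝ :=
    fun j => if j ∈ W then 2 * ((1/(n:ℝ)) * ∑ i, f i j * uu i) else 0 with hg
  set G2 : ℝ := ∑ j, g j ^ 2 with hG2def
  have hG2nn : 0 ≤ G2 := Finset.sum_nonneg fun j _ => sq_nonneg _
  set su : ℝ := Real.sqrt ((1/(n:ℝ)) * ∑ i, uu i ^ 2) with hsu
  set P : ℝ := predNorm n p f δhat with hPdef
  have hPnn : 0 ≤ P := Real.sqrt_nonneg _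
  set AT : ℝ := ∑ j ∈ T, |Υ0 j * δhat j| with hAT
  set ATc : ℝ := ∑ j ∈ Tᶜ, |Υ0 j * δhat j| with hATc
  have hSb : ∀ j, |S j| ≤ lam/((n:ℝ)*c) := by
    intro j
    have h1 := hlam j
    have h2 : lam/((n:ℝ)*c)*c = lam/(n:ℝ) := by field_simp
    nlinarith [abs_nonneg (S j)]
  have hATnn : 0 ≤ AT := Finset.sum_nonneg fun j _ => abs_nonneg _
  have hATcnn : 0 ≤ ATc := Finset.sum_nonneg fun j _ => abs_nonneg _
  have hsnn : 0 ≤ Real.sqrt s := Real.sqrt_nonneg _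
  have hDnn : 0 ≤ (u + 1/c) * lam * Real.sqrt s / ((n:ℝ) * κ) := by
    apply div_nonneg _ (by positivity)
    exact mul_nonneg (mul_nonneg (by linarith) hlampos.le) hsnn
  -- step 0 : lower bound on |g j| for j ∈ W
  have hg_lb : ∀ j ∈ W, lam/(n:ℝ) * (ℓ - 1/c) * Υ0 j ≤ |g j| := by
    intro j hjW
    have hjne : βhat j ≠ 0 := by
      rw [hW, Finset.mem_sdiff, hThat, Finset.mem_filter] at hjW
      exact hjW.1.2
    have hkkt := aux_kkt n p hn f d lam Υ βhat hopt j hjne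
    have hgj : g j = 2 * ((1/(n:ℝ)) * ∑ i, f i j * uu i) := by
      simp only [hg]; rw [if_pos hjW]
    have hsplit : ∑ i, f i j * (d i - ∑ k, f i k * βhat k)
        = (∑ i, f i j * uu i) + ∑ i, f i j * v i := by
      rw [← Finset.sum_add_distrib]
      refine Finset.sum_congr rfl fun i _ => ?_
      have h2 : ∑ k, f i k * (β₀ k - βhat k)
          = ∑ k, f i k * β₀ k - ∑ k, f i k * βhat k := by
        rw [← Finset.sum_sub_distrib]
        exact Finset.sum_congr rfl fun k _ => by ring
      have h3 : uu i = (∑ k, f i k * β₀ k - ∑ k, f i k * βhat k) + a i := by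
        simp only [huu]; rw [h2]
      rw [hmodel i, h3]; ring
    have hvS : 2 * ((1/(n:ℝ)) * ∑ i, f i j * v i) = Υ0 j * S j := by
      rw [hS j]; field_simp [hNne, (hΥ0 j).ne']
    have hA : 2 * ((1/(n:ℝ)) * ∑ i, f i j * (d i - ∑ k, f i k * βhat k))
        = g j + Υ0 j * S j := by
      rw [hsplit, hgj, ← hvS]; ring
    rw [hA] at hkkt
    have habs2 : |g j + Υ0 j * S j| ≤ |g j| + Υ0 j * |S j| := by
      calc |g j + Υ0 j * S j| ≤ |g j| + |Υ0 j * S j| := abs_add_le _ _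
        _ = |g j| + Υ0 j * |S j| := by rw [abs_mul, abs_of_pos (hΥ0 j)]
    have hload1 : lam/(n:ℝ) * (ℓ * Υ0 j) ≤ lam/(n:ℝ) * Υ j :=
      mul_le_mul_of_nonneg_left (hload j).1 (by positivity)
    have hSb' : Υ0 j * |S j| ≤ Υ0 j * (lam/((n:ℝ)*c)) :=
      mul_le_mul_of_nonneg_left (hSb j) (hΥ0 j).le
    have hid : lam/(n:ℝ) * (ℓ - 1/c) * Υ0 j
        = lam/(n:ℝ) * (ℓ * Υ0 j) - Υ0 j * (lam/((n:ℝ)*c)) := by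
      field_simp
    linarith
  -- step A
  have hstepA : (lam/(n:ℝ) * (ℓ - 1/c) * B) * Real.sqrt mhat ≤ Real.sqrt G2 := by
    set q : ℝ := lam/(n:ℝ) * (ℓ - 1/c) * B with hqdef
    have hq0 : 0 ≤ q := by positivity
    have h1 : (mhat:ℝ) * q^2 ≤ G2 := by
      have h2 : ∀ j ∈ W, q^2 ≤ g j ^ 2 := by
        intro j hj
        have h3 : q ≤ lam/(n:ℝ) * (ℓ - 1/c) * Υ0 j := by
          rw [hqdef]
          exact mul_le_mul_of_nonneg_left (hB_le j) (by positivity)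
        calc q^2 ≤ |g j|^2 := pow_le_pow_left₀ hq0 (h3.trans (hg_lb j hj)) 2
          _ = g j ^ 2 := sq_abs _
      calc (mhat:ℝ) * q^2 = ∑ _j ∈ W, q^2 := by
            rw [Finset.sum_const, hmhat, nsmul_eq_mul]
        _ ≤ ∑ j ∈ W, g j ^ 2 := Finset.sum_le_sum h2
        _ ≤ ∑ j, g j ^ 2 :=
            Finset.sum_le_sum_of_subset_of_nonneg (Finset.subset_univ _)
              (fun _ _ _ => sq_nonneg _)
        _ = G2 := hG2def.symm
    calc q * Real.sqrt mhat = Real.sqrt ((mhat:ℝ) * q^2) := by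
          rw [Real.sqrt_mul (Nat.cast_nonneg _), Real.sqrt_sq hq0]; ring
      _ ≤ Real.sqrt G2 := Real.sqrt_le_sqrt h1
  -- step B
  have hsunn : 0 ≤ su := Real.sqrt_nonneg _
  have hstepB : Real.sqrt G2 ≤ 2 * Real.sqrt (φmax mhat) * su := by
    rcases eq_or_lt_of_le hG2nn with hz | hG2pos
    · rw [← hz, Real.sqrt_zero]
      positivity
    · have hG2ne : G2 ≠ 0 := hG2pos.ne'
      set sG : ℝ := Real.sqrt G2 with hsG
      have hsGpos : 0 < sG := Real.sqrt_pos.mpr hG2pos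
      set α : Fin p → ℝ := fun j => g j / sG with hα
      have hαsq : ∑ j, α j ^ 2 = 1 := by
        simp only [hα, div_pow]
        rw [← Finset.sum_div, Real.sq_sqrt hG2nn, ← hG2def, div_self hG2ne]
      have hcard : (Finset.univ.filter (fun j => α j ≠ 0)).card ≤ mhat := by
        rw [hmhat]
        apply Finset.card_le_card
        intro j hj
        rw [Finset.mem_filter] at hj
        by_contra hjW
        apply hj.2
        simp only [hα, hg, if_neg hjW]
        simp
      have hbdd : BddAbove {x : ℝ | ∃ α : Fin p → ℝ,
          (Finset.univ.filter (fun j => α j ≠ 0)).card ≤ mhat ∧ (∑ j, (α j) ^ 2) = 1 ∧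
          x = (1 / (n : ℝ)) * ∑ i, (∑ j, f i j * α j) ^ 2} := by
        refine ⟨(1/(n:ℝ)) * ∑ i, ∑ j, (f i j)^2, ?_⟩
        rintro x ⟨α', _, hα', rfl⟩
        apply mul_le_mul_of_nonneg_left _ (by positivity)
        apply Finset.sum_le_sum
        intro i _
        have h := Finset.sum_mul_sq_le_sq_mul_sq Finset.univ (f i) α'
        rw [hα', mul_one] at h
        exact h
      have hφge : (1/(n:ℝ)) * ∑ i, (∑ j, f i j * α j) ^ 2 ≤ φmax mhat := by
        rw [hφmax]
        exact le_csSup hbdd ⟨α, hcard, hαsq, rfl⟩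
      have h2 : ∑ j, α j * g j = sG := by
        calc ∑ j, α j * g j = ∑ j, g j ^ 2 / sG :=
              Finset.sum_congr rfl fun j _ => by simp only [hα]; ring
          _ = G2 / sG := by rw [← Finset.sum_div, ← hG2def]
          _ = sG := by rw [hsG, Real.div_sqrt]
      have h1 : ∀ j, α j * g j = α j * (2 * ((1/(n:ℝ)) * ∑ i, f i j * uu i)) := by
        intro j
        by_cases hjW : j ∈ W
        · simp only [hg]; rw [if_pos hjW]
        · have hgz : g j = 0 := by simp only [hg]; rw [if_neg hjW]
          have hαz : α j = 0 := by simp only [hα]; rw [hgz, zero_div]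
          rw [hαz, zero_mul, zero_mul]
      have hkey : sG = 2 * ((1/(n:ℝ)) * ∑ i, (∑ j, f i j * α j) * uu i) := by
        rw [← h2, Finset.sum_congr rfl fun j _ => h1 j]
        exact aux_swap n p f α uu
      have hCS := aux_cs Finset.univ (fun i => ∑ j, f i j * α j) uu
      have hXnn : (0:ℝ) ≤ ∑ i, (∑ j, f i j * α j)^2 := by positivity
      have hYnn : (0:ℝ) ≤ ∑ i, uu i ^2 := by positivity
      have hsplit2 := aux_sqrt_split (n:ℝ) (∑ i, (∑ j, f i j * α j)^2) (∑ i, uu i ^2)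
        hN.le hXnn hYnn
      calc sG = 2 * ((1/(n:ℝ)) * ∑ i, (∑ j, f i j * α j) * uu i) := hkey
        _ ≤ 2 * ((1/(n:ℝ)) * (Real.sqrt (∑ i, (∑ j, f i j * α j)^2) * Real.sqrt (∑ i, uu i ^2))) := by
            apply mul_le_mul_of_nonneg_left _ (by norm_num)
            exact mul_le_mul_of_nonneg_left hCS (by positivity)
        _ = 2 * (Real.sqrt ((1/(n:ℝ)) * ∑ i, (∑ j, f i j * α j)^2)
              * Real.sqrt ((1/(n:ℝ)) * ∑ i, uu i ^2)) := by rw [hsplit2]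
        _ ≤ 2 * (Real.sqrt (φmax mhat) * su) := by
            apply mul_le_mul_of_nonneg_left _ (by norm_num)
            rw [hsu]
            exact mul_le_mul_of_nonneg_right (Real.sqrt_le_sqrt hφge) (Real.sqrt_nonneg _)
        _ = 2 * Real.sqrt (φmax mhat) * su := by ring
  -- step C
  have hstepC : su ≤ P + cs := by
    set x : Fin n → ℝ := fun i => ∑ k, f i k * (β₀ k - βhat k) with hx
    have h0 : (0:ℝ) ≤ 1/(n:ℝ) := by positivity
    have h1 : su = Real.sqrt (1/(n:ℝ)) * Real.sqrt (∑ i, (x i + a i)^2) := by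
      rw [hsu, show (∑ i, uu i ^ 2) = ∑ i, (x i + a i)^2 from rfl,
        Real.sqrt_mul h0]
    have h2 := aux_tri Finset.univ x a
    have hxnn : (0:ℝ) ≤ ∑ i, x i ^ 2 := by positivity
    have h3 : Real.sqrt (1/(n:ℝ)) * Real.sqrt (∑ i, x i ^ 2) = P := by
      rw [← Real.sqrt_mul h0]
      have hxi : ∀ i, x i = -∑ j, f i j * δhat j := by
        intro i
        have h4 : x i + ∑ j, f i j * δhat j = 0 := by
          simp only [hx, hδhat]
          rw [← Finset.sum_add_distrib]
          apply Finset.sum_eq_zero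
          intro k _
          ring
        linarith
      have h5 : ∑ i, x i ^ 2 = ∑ i, (∑ j, f i j * δhat j)^2 :=
        Finset.sum_congr rfl fun i _ => by rw [hxi i]; ring
      rw [h5, hPdef]
      rfl
    have h4 : Real.sqrt (1/(n:ℝ)) * Real.sqrt (∑ i, a i ^ 2) ≤ cs := by
      rw [← Real.sqrt_mul h0]
      exact hcs
    calc su = Real.sqrt (1/(n:ℝ)) * Real.sqrt (∑ i, (x i + a i)^2) := h1
      _ ≤ Real.sqrt (1/(n:ℝ)) * (Real.sqrt (∑ i, x i ^ 2) + Real.sqrt (∑ i, a i ^ 2)) :=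
          mul_le_mul_of_nonneg_left h2 (Real.sqrt_nonneg _)
      _ = Real.sqrt (1/(n:ℝ)) * Real.sqrt (∑ i, x i ^ 2)
            + Real.sqrt (1/(n:ℝ)) * Real.sqrt (∑ i, a i ^ 2) := by ring
      _ ≤ P + cs := by rw [h3]; linarith
  -- step D
  have hlamn : (0:ℝ) ≤ lam/(n:ℝ) := by positivity
  have hstepD : P ≤ 2 * cs + (u + 1/c) * lam * Real.sqrt s / ((n:ℝ) * κ) := by
    by_cases hδz : δhat = 0
    · have hP0 : P = 0 := by
        rw [hPdef]
        unfold predNorm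
        simp [hδz]
      rw [hP0]
      linarith
    · set FD : Fin n → ℝ := fun i => ∑ j, f i j * δhat j with hFD
      have hFDnn : (0:ℝ) ≤ ∑ i, FD i ^ 2 := by positivity
      have hP2 : P^2 = (1/(n:ℝ)) * ∑ i, FD i ^ 2 := by
        rw [hPdef]
        exact Real.sq_sqrt (by positivity)
      have hPsqrt : Real.sqrt ((1/(n:ℝ)) * ∑ i, FD i ^ 2) = P := by rw [hPdef]; rfl
      have hqo := hopt β₀
      have hd2 : ∀ i, d i - ∑ j, f i j * βhat j = (a i + v i) - FD i := by
        intro i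
        rw [hmodel i]
        have h1 : FD i = ∑ j, f i j * βhat j - ∑ j, f i j * β₀ j := by
          simp only [hFD, hδhat]
          rw [← Finset.sum_sub_distrib]
          exact Finset.sum_congr rfl fun k _ => by ring
        rw [h1]; ring
      have hsq1 : ∑ i, (d i - ∑ j, f i j * βhat j)^2 = ∑ i, ((a i + v i) - FD i)^2 :=
        Finset.sum_congr rfl fun i _ => by rw [hd2 i]
      have hsq0 : ∑ i, (d i - ∑ j, f i j * β₀ j)^2 = ∑ i, (a i + v i)^2 :=
        Finset.sum_congr rfl fun i _ => by rw [hmodel i]; ring_nf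
      rw [hsq1, hsq0] at hqo
      have hexp : ∑ i, ((a i + v i) - FD i)^2
          = ∑ i, (a i + v i)^2 - 2*∑ i, a i * FD i - 2*∑ i, v i * FD i + ∑ i, FD i ^2 := by
        rw [Finset.mul_sum, Finset.mul_sum, ← Finset.sum_sub_distrib, ← Finset.sum_sub_distrib,
          ← Finset.sum_add_distrib]
        exact Finset.sum_congr rfl fun i _ => by ring
      rw [hexp] at hqo
      -- bound on the a-term
      have haFD2 : (1/(n:ℝ))*(2*∑ i, a i * FD i) ≤ 2*cs*P := by
        have haFD := aux_cs Finset.univ a FD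
        have h6 := aux_sqrt_split (n:ℝ) (∑ i, a i ^2) (∑ i, FD i ^2) hN.le (by positivity) hFDnn
        calc (1/(n:ℝ))*(2*∑ i, a i * FD i)
            ≤ (1/(n:ℝ))*(2*(Real.sqrt (∑ i, a i ^2) * Real.sqrt (∑ i, FD i ^2))) := by
              apply mul_le_mul_of_nonneg_left _ (by positivity)
              linarith [haFD]
          _ = 2*(Real.sqrt ((1/(n:ℝ)) * ∑ i, a i ^2) * Real.sqrt ((1/(n:ℝ)) * ∑ i, FD i ^2)) := by
              rw [h6]; ring
          _ = 2*(Real.sqrt ((1/(n:ℝ)) * ∑ i, a i ^2) * P) := by rw [hPsqrt]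
          _ ≤ 2*(cs*P) := by
              apply mul_le_mul_of_nonneg_left _ (by norm_num)
              exact mul_le_mul_of_nonneg_right hcs hPnn
          _ = 2*cs*P := by ring
      -- bound on the v-term
      have hvFD : (1/(n:ℝ))*(2*∑ i, v i * FD i) ≤ (lam/((n:ℝ)*c))*(AT + ATc) := by
        have hswap := aux_swap n p f δhat v
        have hc1 : 2*((1/(n:ℝ))*∑ i, (∑ j, f i j * δhat j) * v i)
            = (1/(n:ℝ))*(2*∑ i, v i * FD i) := by
          rw [show (∑ i, (∑ j, f i j * δhat j) * v i) = ∑ i, v i * FD i from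
            Finset.sum_congr rfl fun i _ => by simp only [hFD]; ring]
          ring
        have hterm : ∀ j, δhat j * (2*((1/(n:ℝ))*∑ i, f i j * v i)) = δhat j * (Υ0 j * S j) := by
          intro j
          rw [hS j]
          field_simp [hNne, (hΥ0 j).ne']
        have hbnd : ∀ j, δhat j * (Υ0 j * S j) ≤ |Υ0 j * δhat j| * (lam/((n:ℝ)*c)) := by
          intro j
          calc δhat j * (Υ0 j * S j) ≤ |δhat j * (Υ0 j * S j)| := le_abs_self _
            _ = |Υ0 j * δhat j| * |S j| := by rw [abs_mul, abs_mul, abs_mul]; ring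
            _ ≤ |Υ0 j * δhat j| * (lam/((n:ℝ)*c)) :=
                mul_le_mul_of_nonneg_left (hSb j) (abs_nonneg _)
        have hsum0 : ∑ j, |Υ0 j * δhat j| = AT + ATc := by
          rw [hAT, hATc]
          exact (Finset.sum_add_sum_compl T _).symm
        calc (1/(n:ℝ))*(2*∑ i, v i * FD i)
            = ∑ j, δhat j * (Υ0 j * S j) := by
              rw [← hc1, ← hswap]
              exact Finset.sum_congr rfl fun j _ => hterm j
          _ ≤ ∑ j, |Υ0 j * δhat j| * (lam/((n:ℝ)*c)) := Finset.sum_le_sum fun j _ => hbnd j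
          _ = (lam/((n:ℝ)*c))*(AT + ATc) := by rw [← Finset.sum_mul, hsum0]; ring
      -- penalty bound
      have hpen : ∑ j, Υ j * |β₀ j| - ∑ j, Υ j * |βhat j| ≤ u * AT - ℓ * ATc := by
        have hTbd : ∀ j ∈ T, Υ j * |β₀ j| - Υ j * |βhat j| ≤ u * |Υ0 j * δhat j| := by
          intro j _
          have hΥpos : (0:ℝ) ≤ Υ j := ((mul_pos hℓpos (hΥ0 j)).le).trans (hload j).1
          have habs : |β₀ j| - |βhat j| ≤ |δhat j| := by
            have h1 := abs_sub_abs_le_abs_sub (β₀ j) (βhat j)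
            have h2 : |β₀ j - βhat j| = |δhat j| := by
              simp only [hδhat]; rw [abs_sub_comm]
            linarith
          have h3 : |Υ0 j * δhat j| = Υ0 j * |δhat j| := by
            rw [abs_mul, abs_of_pos (hΥ0 j)]
          rw [h3]
          calc Υ j * |β₀ j| - Υ j * |βhat j| = Υ j * (|β₀ j| - |βhat j|) := by ring
            _ ≤ Υ j * |δhat j| := mul_le_mul_of_nonneg_left habs hΥpos
            _ ≤ (u * Υ0 j) * |δhat j| := mul_le_mul_of_nonneg_right (hload j).2 (abs_nonneg _)
            _ = u * (Υ0 j * |δhat j|) := by ring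
        have hTcbd : ∀ j ∈ Tᶜ, Υ j * |β₀ j| - Υ j * |βhat j| ≤ -(ℓ * |Υ0 j * δhat j|) := by
          intro j hj
          have hb0 : β₀ j = 0 := by
            rw [Finset.mem_compl, hT, Finset.mem_filter] at hj
            push_neg at hj
            exact hj (Finset.mem_univ j)
          have hδj : |δhat j| = |βhat j| := by
            simp only [hδhat]; rw [hb0, sub_zero]
          have h3 : |Υ0 j * δhat j| = Υ0 j * |δhat j| := by
            rw [abs_mul, abs_of_pos (hΥ0 j)]
          have h5 : ℓ * Υ0 j * |βhat j| ≤ Υ j * |βhat j| :=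
            mul_le_mul_of_nonneg_right (hload j).1 (abs_nonneg _)
          rw [hb0, abs_zero, mul_zero, h3, hδj]
          linarith
        calc ∑ j, Υ j * |β₀ j| - ∑ j, Υ j * |βhat j|
            = ∑ j, (Υ j * |β₀ j| - Υ j * |βhat j|) := (Finset.sum_sub_distrib _ _).symm
          _ = ∑ j ∈ T, (Υ j * |β₀ j| - Υ j * |βhat j|)
              + ∑ j ∈ Tᶜ, (Υ j * |β₀ j| - Υ j * |βhat j|) :=
              (Finset.sum_add_sum_compl T _).symm
          _ ≤ ∑ j ∈ T, u * |Υ0 j * δhat j| + ∑ j ∈ Tᶜ, -(ℓ * |Υ0 j * δhat j|) :=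
              add_le_add (Finset.sum_le_sum hTbd) (Finset.sum_le_sum hTcbd)
          _ = u * AT - ℓ * ATc := by
              rw [← Finset.mul_sum, Finset.sum_neg_distrib, ← Finset.mul_sum, ← hAT, ← hATc]
              ring
      -- combine
      have hPsq : P^2 ≤ 2*cs*P + (lam/(n:ℝ))*((u + 1/c)*AT - (ℓ - 1/c)*ATc) := by
        have hfe : lam/((n:ℝ)*c)*(AT+ATc) + (lam/(n:ℝ))*(u*AT - ℓ*ATc)
            = (lam/(n:ℝ))*((u+1/c)*AT - (ℓ-1/c)*ATc) := by
          field_simp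
          ring
        have heq1 : (1/(n:ℝ))*(∑ i, (a i + v i)^2 - 2*∑ i, a i * FD i - 2*∑ i, v i * FD i
              + ∑ i, FD i ^2)
            = (1/(n:ℝ))*(∑ i, (a i + v i)^2) - (1/(n:ℝ))*(2*∑ i, a i * FD i)
              - (1/(n:ℝ))*(2*∑ i, v i * FD i) + (1/(n:ℝ))*(∑ i, FD i ^2) := by ring
        have heq2 := mul_le_mul_of_nonneg_left hpen hlamn
        have heq3 : (lam/(n:ℝ))*(∑ j, Υ j * |β₀ j| - ∑ j, Υ j * |βhat j|)
            = (lam/(n:ℝ))*(∑ j, Υ j * |β₀ j|) - (lam/(n:ℝ))*(∑ j, Υ j * |βhat j|) := by ring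
        rw [hP2]
        rw [heq1] at hqo
        rw [heq3] at heq2
        linarith
      -- case split on the restricted eigenvalue condition
      rcases le_or_gt ATc (c0 * AT) with hcase | hcase
      · have hATpos : 0 < AT := by
          rcases eq_or_lt_of_le hATnn with h0 | h; swap
          · exact h
          exfalso
          apply hδz
          have hATc0 : ATc ≤ 0 := by rw [← h0, mul_zero] at hcase; exact hcase
          have hzT : ∀ j ∈ T, |Υ0 j * δhat j| = 0 := by
            intro j hj
            exact (Finset.sum_eq_zero_iff_of_nonneg (fun k _ => abs_nonneg _)).mp
              (by rw [← hAT]; exact h0.symm) j hj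
          have hzTc : ∀ j ∈ Tᶜ, |Υ0 j * δhat j| = 0 := by
            intro j hj
            exact (Finset.sum_eq_zero_iff_of_nonneg (fun k _ => abs_nonneg _)).mp
              (by rw [← hATc]; linarith) j hj
          funext j
          have hz : |Υ0 j * δhat j| = 0 := by
            by_cases hjT : j ∈ T
            · exact hzT j hjT
            · exact hzTc j (Finset.mem_compl.mpr hjT)
          have := abs_eq_zero.mp hz
          rcases mul_eq_zero.mp this with h' | h'
          · exact absurd h' (hΥ0 j).ne'
          · simpa using h'
        have hbb : BddBelow {r : ℝ | ∃ δ : Fin p → ℝ, δ ≠ 0 ∧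
            (∑ j ∈ Tᶜ, |Υ0 j * δ j|) ≤ c0 * ∑ j ∈ T, |Υ0 j * δ j| ∧
            r = Real.sqrt s * predNorm n p f δ / ∑ j ∈ T, |Υ0 j * δ j|} := by
          refine ⟨0, ?_⟩
          rintro r ⟨δ', _, _, rfl⟩
          apply div_nonneg _ (Finset.sum_nonneg fun j _ => abs_nonneg _)
          exact mul_nonneg (Real.sqrt_nonneg _) (Real.sqrt_nonneg _)
        have hmem : Real.sqrt s * P / AT ∈ {r : ℝ | ∃ δ : Fin p → ℝ, δ ≠ 0 ∧
            (∑ j ∈ Tᶜ, |Υ0 j * δ j|) ≤ c0 * ∑ j ∈ T, |Υ0 j * δ j| ∧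
            r = Real.sqrt s * predNorm n p f δ / ∑ j ∈ T, |Υ0 j * δ j|} := by
          refine ⟨δhat, hδz, ?_, ?_⟩
          · rw [← hATc, ← hAT]; exact hcase
          · rw [hPdef, hAT]
        have hκle : κ ≤ Real.sqrt s * P / AT := by
          rw [hκ]; exact csInf_le hbb hmem
        have hATle : AT ≤ Real.sqrt s * P / κ := by
          have h1 : κ * AT ≤ Real.sqrt s * P := by
            have := (le_div_iff₀ hATpos).mp hκle
            linarith
          rw [le_div_iff₀ hκpos]
          linarith
        have hdrop : P^2 ≤ 2*cs*P + (lam/(n:ℝ))*((u+1/c)*AT) := by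
          have ha : 0 ≤ (lam/(n:ℝ))*((ℓ-1/c)*ATc) :=
            mul_nonneg hlamn (mul_nonneg hℓ1c.le hATcnn)
          have hb : (lam/(n:ℝ))*((u+1/c)*AT - (ℓ-1/c)*ATc)
              = (lam/(n:ℝ))*((u+1/c)*AT) - (lam/(n:ℝ))*((ℓ-1/c)*ATc) := by ring
          linarith [hPsq]
        have h9 : (lam/(n:ℝ))*((u+1/c)*AT) ≤ (lam/(n:ℝ))*((u+1/c)*(Real.sqrt s*P/κ)) := by
          apply mul_le_mul_of_nonneg_left _ hlamn
          exact mul_le_mul_of_nonneg_left hATle (by linarith)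
        have h10 : (lam/(n:ℝ))*((u+1/c)*(Real.sqrt s*P/κ))
            = P * ((u+1/c)*lam*Real.sqrt s/((n:ℝ)*κ)) := by
          field_simp
        have hfinal2 : P^2 ≤ P * (2*cs + (u+1/c)*lam*Real.sqrt s/((n:ℝ)*κ)) := by
          have heq : P * (2*cs + (u+1/c)*lam*Real.sqrt s/((n:ℝ)*κ))
              = 2*cs*P + P * ((u+1/c)*lam*Real.sqrt s/((n:ℝ)*κ)) := by ring
          linarith
        rcases eq_or_lt_of_le hPnn with hP0 | hPpos
        · rw [← hP0]; linarith
        · rw [sq] at hfinal2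
          exact le_of_mul_le_mul_left hfinal2 hPpos
      · have hneg : (u+1/c)*AT - (ℓ-1/c)*ATc ≤ 0 := by
          have h1 : (u+1/c) = (ℓ-1/c)*c0 := hc0eq.symm
          have hmul := mul_lt_mul_of_pos_left hcase hℓ1c
          rw [h1]
          linarith [hmul]
        have hP2cs : P^2 ≤ 2*cs*P := by
          have hZ : (lam/(n:ℝ))*((u+1/c)*AT - (ℓ-1/c)*ATc) ≤ 0 :=
            mul_nonpos_iff.mpr (Or.inl ⟨hlamn, hneg⟩)
          linarith [hPsq]
        rcases eq_or_lt_of_le hPnn with hP0 | hPpos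
        · rw [← hP0]; linarith
        · have hPle : P ≤ 2*cs := by
            have h3 : P*P ≤ (2*cs)*P := by
              have h4 := hP2cs
              rw [sq] at h4
              linarith
            exact le_of_mul_le_mul_right h3 hPpos
          linarith
  -- final combination
  set φr : ℝ := Real.sqrt (φmax mhat) with hφr
  have hφnn : 0 ≤ φr := Real.sqrt_nonneg _
  have hq_pos : 0 < lam/(n:ℝ) * (ℓ - 1/c) * B :=
    mul_pos (mul_pos (div_pos hlampos hN) hℓ1c) hBpos
  have hchain : (lam/(n:ℝ) * (ℓ - 1/c) * B) * Real.sqrt mhat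
      ≤ 2*φr*(3*cs + (u + 1/c)*lam*Real.sqrt s/((n:ℝ)*κ)) := by
    calc (lam/(n:ℝ) * (ℓ - 1/c) * B) * Real.sqrt mhat ≤ Real.sqrt G2 := hstepA
      _ ≤ 2*φr*su := hstepB
      _ ≤ 2*φr*(P + cs) := mul_le_mul_of_nonneg_left hstepC (by positivity)
      _ ≤ 2*φr*(3*cs + (u + 1/c)*lam*Real.sqrt s/((n:ℝ)*κ)) := by
          apply mul_le_mul_of_nonneg_left _ (by positivity)
          linarith [hstepD]
  have hE : (lam/(n:ℝ) * (ℓ - 1/c) * B)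
        * (φr * Sup * c0 * (2*Real.sqrt s/κ + 6*(n:ℝ)*cs/lam))
      = φr*((u + 1/c)*(2*lam*Real.sqrt s/((n:ℝ)*κ)) + 6*cs*(u + 1/c)) := by
    rw [hBdef, hc0]
    field_simp
  have hle2 : 2*φr*(3*cs + (u + 1/c)*lam*Real.sqrt s/((n:ℝ)*κ))
      ≤ (lam/(n:ℝ) * (ℓ - 1/c) * B)
        * (φr * Sup * c0 * (2*Real.sqrt s/κ + 6*(n:ℝ)*cs/lam)) := by
    rw [hE]
    have h0 : 0 ≤ 6*(cs*φr) := mul_nonneg (by norm_num) (mul_nonneg hcs0 hφnn)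
    have h1 : (6*(cs*φr))*1 ≤ (6*(cs*φr))*(u + 1/c) := mul_le_mul_of_nonneg_left huc h0
    have heq : φr*((u + 1/c)*(2*lam*Real.sqrt s/((n:ℝ)*κ)))
        = 2*φr*((u + 1/c)*lam*Real.sqrt s/((n:ℝ)*κ)) := by ring
    have hexp : 2*φr*(3*cs + (u + 1/c)*lam*Real.sqrt s/((n:ℝ)*κ))
        = 6*(cs*φr) + 2*φr*((u + 1/c)*lam*Real.sqrt s/((n:ℝ)*κ)) := by ring
    have hexp2 : φr*((u + 1/c)*(2*lam*Real.sqrt s/((n:ℝ)*κ)) + 6*cs*(u + 1/c))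
        = φr*((u + 1/c)*(2*lam*Real.sqrt s/((n:ℝ)*κ))) + (6*(cs*φr))*(u + 1/c) := by ring
    rw [hexp, hexp2, heq]
    linarith
  exact le_of_mul_le_mul_left (hchain.trans hle2) hq_pos
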